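/- Let X = p∂/∂x + q∂/∂y be a polynomial vector field with polynomial first integral H = f1^{n1} ⋯ fr^{nr} where r ≥ 2. If for every i ∈ {2,…,r} there exists α_i ∈ ℂ with f_i = f_1 + α_i, then f_1 itself is a first integral of X. -/
import Mathlib


open MvPolynomial

/-- A multivariate polynomial of nonzero total degree is transcendental over `ℂ`. -/
lemma transcendental_of_totalDegree_ne_zero (g : MvPolynomial (Fin 2) ℂ)
    (hg : g.totalDegree ≠ 0) : Transcendental ℂ g := by
  intro halg
  have hint : IsIntegral ℂ g := halg.isIntegral
  have h1 : (minpoly ℂ g).degree = 1 :=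
    IsAlgClosed.degree_eq_one_of_irreducible ℂ (minpoly.irreducible hint)
  have hq : (minpoly ℂ g).leadingCoeff = 1 := minpoly.monic hint
  have h0 : Polynomial.aeval g (minpoly ℂ g) = 0 := minpoly.aeval ℂ g
  rw [Polynomial.eq_X_add_C_of_degree_eq_one h1, hq, map_one, one_mul, map_add,
    Polynomial.aeval_X, Polynomial.aeval_C, add_eq_zero_iff_eq_neg] at h0
  apply hg
  rw [h0, ← map_neg, MvPolynomial.algebraMap_eq]
  exact totalDegree_C _

/-- If `X = p∂x + q∂y` has polynomial first integral `H = ∏ fᵢ^{nᵢ}` with `r ≥ 2`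
and every `fᵢ` differs from `f₁` by a constant, then `f₁` itself is a first integral. -/
theorem stmt_1 {r : ℕ} (hr : 2 ≤ r) (p q : MvPolynomial (Fin 2) ℂ)
    (f : Fin r → MvPolynomial (Fin 2) ℂ) (n : Fin r → ℕ) (hn : ∀ i, 0 < n i)
    (hfnc : ∀ i, (f i).totalDegree ≠ 0)
    (hfi : p * pderiv 0 (∏ i, f i ^ n i) + q * pderiv 1 (∏ i, f i ^ n i) = 0)
    (hα : ∀ i : Fin r, ∃ α : ℂ, f i = f ⟨0, by omega⟩ + C α) :
    p * pderiv 0 (f ⟨0, by omega⟩) + q * pderiv 1 (f ⟨0, by omega⟩) = 0 := by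
  set g : MvPolynomial (Fin 2) ℂ := f ⟨0, by omega⟩ with hg
  choose α hαf using hα
  set P : Polynomial ℂ := ∏ i, (Polynomial.X + Polynomial.C (α i)) ^ n i with hP
  have haev : Polynomial.aeval g P = ∏ i, f i ^ n i := by
    rw [hP, map_prod]
    refine Finset.prod_congr rfl fun i _ => ?_
    rw [hαf i, map_pow, map_add, Polynomial.aeval_X, Polynomial.aeval_C,
      MvPolynomial.algebraMap_eq]
  have hchain : ∀ k : Fin 2,
      pderiv k (∏ i, f i ^ n i) = Polynomial.aeval g (Polynomial.derivative P) * pderiv k g := by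
    intro k
    rw [← haev]
    have := (pderiv (R := ℂ) k).map_aeval P g
    rw [this, smul_eq_mul]
  rw [hchain 0, hchain 1] at hfi
  have hfactor : Polynomial.aeval g (Polynomial.derivative P) *
      (p * pderiv 0 g + q * pderiv 1 g) = 0 := by linear_combination hfi
  rcases mul_eq_zero.mp hfactor with h | h
  · exfalso
    have htr : Transcendental ℂ g := transcendental_of_totalDegree_ne_zero g (hfnc _)
    have hinj := transcendental_iff_injective (R := ℂ) (x := g) |>.mp htr
    have hPd : Polynomial.derivative P = 0 := by
      have : Polynomial.aeval g (Polynomial.derivative P) = Polynomial.aeval g (0 : Polynomial ℂ) := by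
        simpa using h
      exact hinj this
    have hdeg : P.natDegree = 0 := Polynomial.natDegree_eq_zero_of_derivative_eq_zero hPd
    have hmono : ∀ i : Fin r, ((Polynomial.X + Polynomial.C (α i)) ^ n i).natDegree = n i := by
      intro i
      rw [Polynomial.natDegree_pow, Polynomial.natDegree_X_add_C, mul_one]
    have hne : ∀ i ∈ (Finset.univ : Finset (Fin r)),
        (Polynomial.X + Polynomial.C (α i)) ^ n i ≠ 0 := by
      intro i _
      exact pow_ne_zero _ (Polynomial.X_add_C_ne_zero _)
    rw [hP, Polynomial.natDegree_prod _ _ hne, Finset.sum_eq_zero_iff] at hdeg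
    have := hdeg ⟨0, by omega⟩ (Finset.mem_univ _)
    rw [hmono] at this
    exact (hn ⟨0, by omega⟩).ne' this
  · exact h
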